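/- For a positive integer n, Σ_{k,p ≥ 0} B(n,p,k)·x^p·y^k = 2^{-n}·[((1+x)(1+y) + √D)^n + ((1+x)(1+y) - √D)^n], where D = (1+x)²(1+y)² - 4x(1+y), B(n,p,k) = (n/k)·Σ_{r≥0} C(p,r)·C(n-p,r)·C(n-r-1,k-r-1) for k ≥ 1, and B(n,p,0) is defined by B(n,0,0) = B(n,n,0) = 1 and B(n,p,0) = 0 otherwise. -/

import Mathlib

open Finset

/-- Binomial coefficient `C(a,b)` for integers, with `C(a,b) = 0` unless `0 ≤ b ≤ a`. -/
def C (a b : ℤ) : ℚ := if 0 ≤ b ∧ b ≤ a then (Nat.choose a.toNat b.toNat : ℚ) else 0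

/-- `B(n,p,k) = (n/k) · Σ_{r≥0} C(p,r)·C(n-p,r)·C(n-r-1,k-r-1)`. -/
def B (n p k : ℕ) : ℚ :=
  ((n : ℚ) / k) * ∑ r ∈ range (n + 1),
    C p r * C ((n : ℤ) - p) r * C ((n : ℤ) - r - 1) ((k : ℤ) - r - 1)

/-- `B` extended to `k = 0` by `B(n,0,0) = B(n,n,0) = 1` and `B(n,p,0) = 0` otherwise. -/
def Bfull (n p k : ℕ) : ℚ :=
  if k = 0 then (if p = 0 ∨ p = n then 1 else 0) else B n p k

lemma C_neg {a b : ℤ} (h : b < 0) : C a b = 0 := by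
  unfold C; rw [if_neg]; rintro ⟨h1, _⟩; omega

lemma C_gt {a b : ℤ} (h : a < b) : C a b = 0 := by
  unfold C; rw [if_neg]; rintro ⟨_, h2⟩; omega

lemma C_zero {a : ℤ} (h : 0 ≤ a) : C a 0 = 1 := by
  unfold C; rw [if_pos ⟨le_refl 0, h⟩]; simp

lemma C_eq_choose {a : ℤ} (h : 0 ≤ a) (j : ℕ) : C a (j : ℤ) = (a.toNat.choose j : ℚ) := by
  unfold C
  by_cases h2 : (j : ℤ) ≤ a
  · rw [if_pos ⟨Int.ofNat_nonneg j, h2⟩, Int.toNat_natCast]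
  · rw [if_neg (by rintro ⟨_, hh⟩; exact h2 hh)]
    rw [Nat.choose_eq_zero_of_lt (by omega)]
    simp

lemma pascal (a b : ℤ) (ha : 0 ≤ a) : C (a+1) b = C a b + C a (b-1) := by
  rcases lt_or_ge b 0 with hb | hb
  · rw [C_neg hb, C_neg hb, C_neg (by omega)]; ring
  rcases eq_or_lt_of_le hb with hb0 | hb1
  · rw [← hb0]; rw [C_zero (by omega), C_zero ha, C_neg (by omega)]; ring
  · -- b ≥ 1
    obtain ⟨B, rfl⟩ : ∃ B : ℕ, b = (B : ℤ) + 1 := ⟨(b-1).toNat, by omega⟩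
    rw [show ((B:ℤ)+1) - 1 = (B:ℤ) by ring]
    rw [show (a:ℤ)+1 = ((a.toNat + 1 : ℕ) : ℤ) by omega]
    rw [show ((B:ℤ)+1) = ((B+1 : ℕ) : ℤ) by push_cast; ring]
    rw [C_eq_choose (by omega), C_eq_choose ha, C_eq_choose ha]
    rw [Int.toNat_natCast]
    rw [Nat.choose_succ_succ]
    push_cast; ring

lemma pascal' (a b : ℤ) (hb : 1 ≤ b) : C (a+1) b = C a b + C a (b-1) := by
  rcases le_or_gt 0 a with ha | ha
  · exact pascal a b ha
  · rw [C_gt (by omega), C_gt (by omega), C_gt (by omega)]; ring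

lemma absorb1 (m : ℤ) (k : ℕ) :
    ((k:ℚ)+1) * C m ((k:ℤ)+1) + (k:ℚ) * C m (k:ℤ) = (m:ℚ) * C m (k:ℤ) := by
  rcases lt_or_ge m 0 with hm | hm
  · rw [C_gt (by omega), C_gt (by omega)]; ring
  · rw [show ((k:ℤ)+1) = ((k+1:ℕ):ℤ) by push_cast; ring]
    rw [C_eq_choose hm, C_eq_choose hm]
    have := Nat.choose_succ_right_eq m.toNat k
    have hq : ((m.toNat.choose (k+1) * (k+1) : ℕ) : ℚ) = ((m.toNat.choose k * (m.toNat - k) : ℕ) : ℚ) := by rw [this]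
    rcases le_or_gt k m.toNat with hk | hk
    · push_cast [hk] at hq
      push_cast
      have hmk : ((m.toNat : ℚ)) = (m : ℚ) := by
        norm_cast; omega
      nlinarith [hq]
    · rw [Nat.choose_eq_zero_of_lt hk, Nat.choose_eq_zero_of_lt (by omega)]
      push_cast; ring
  
lemma absorb2 (m : ℤ) (i : ℕ) :
    ((i:ℚ)+1) * C m ((i:ℤ)+1) = (m:ℚ) * C (m-1) (i:ℤ) := by
  rcases lt_or_ge m 1 with hm | hm
  · rcases eq_or_lt_of_le (by omega : m ≤ 0) with h0 | h0
    · rw [C_gt (by omega), h0]; simp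
    · rw [C_gt (by omega), C_gt (by omega)]; ring
  · rw [show ((i:ℤ)+1) = ((i+1:ℕ):ℤ) by push_cast; ring]
    rw [C_eq_choose (by omega), C_eq_choose (by omega)]
    obtain ⟨M, hM⟩ : ∃ M : ℕ, m.toNat = M + 1 := ⟨m.toNat - 1, by omega⟩
    have h2 : (m-1).toNat = M := by omega
    rw [hM, h2]
    have hnat : (M+1) * M.choose i = (M+1).choose (i+1) * (i+1) := Nat.add_one_mul_choose_eq M i
    have hq := congrArg (fun z : ℕ => (z:ℚ)) hnat
    push_cast at hq
    have hmq : (m:ℚ) = ((M:ℚ)+1) := by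
      have : m = (M : ℤ) + 1 := by omega
      rw [this]; push_cast; ring
    rw [hmq]; nlinarith [hq]

def Phig (j m : ℕ) (p k : ℤ) : ℚ :=
  ∑ i ∈ range (m+1), (-1)^i * C ((m:ℤ)-i) i * C ((m:ℤ)-2*i) (p-i) * C ((m:ℤ)+j-i) k

lemma Phig6 (j n : ℕ) (p k : ℤ) :
    Phig j (n+2) p k = Phig j (n+1) p k + Phig j (n+1) (p-1) k + Phig j (n+1) p (k-1)
      + Phig j (n+1) (p-1) (k-1) - Phig j n (p-1) k - Phig j n (p-1) (k-1) := by
  have hA : Phig j (n+1) p k + Phig j (n+1) (p-1) k + Phig j (n+1) p (k-1)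
      + Phig j (n+1) (p-1) (k-1)
      = ∑ i ∈ range (n+2), (-1)^i * C ((n:ℤ)+1-i) i * C ((n:ℤ)+2-2*i) (p-i)
          * C ((n:ℤ)+2+j-i) k := by
    unfold Phig
    rw [← sum_add_distrib, ← sum_add_distrib, ← sum_add_distrib]
    apply sum_congr rfl
    intro i hi
    simp only [mem_range] at hi
    push_cast
    have hk2 : C ((n:ℤ)+1+j-i) k + C ((n:ℤ)+1+j-i) (k-1) = C ((n:ℤ)+2+j-i) k := by
      have h := pascal ((n:ℤ)+1+j-i) k (by omega)
      rw [show (n:ℤ)+1+j-i+1 = (n:ℤ)+2+j-i by ring] at h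
      linarith
    by_cases hc : 2*(i:ℤ) ≤ (n:ℤ)+1
    · have hp2 : C ((n:ℤ)+1-2*i) (p-i) + C ((n:ℤ)+1-2*i) (p-1-i) = C ((n:ℤ)+2-2*i) (p-i) := by
        have h := pascal ((n:ℤ)+1-2*i) (p-i) (by omega)
        rw [show (n:ℤ)+1-2*i+1 = (n:ℤ)+2-2*i by ring,
            show (p-i)-1 = p-1-(i:ℤ) by ring] at h
        linarith
      rw [← hk2, ← hp2]; ring
    · have h0 : C ((n:ℤ)+1-i) i = 0 := C_gt (by omega)
      rw [h0]; ring
  have hQ : Phig j n (p-1) k + Phig j n (p-1) (k-1)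
      = ∑ i ∈ range (n+1), (-1)^i * C ((n:ℤ)-i) i * C ((n:ℤ)-2*i) (p-1-i)
          * C ((n:ℤ)+1+j-i) k := by
    unfold Phig
    rw [← sum_add_distrib]
    apply sum_congr rfl
    intro i hi
    simp only [mem_range] at hi
    push_cast
    have hk2 : C ((n:ℤ)+j-i) k + C ((n:ℤ)+j-i) (k-1) = C ((n:ℤ)+1+j-i) k := by
      have h := pascal ((n:ℤ)+j-i) k (by omega)
      rw [show (n:ℤ)+j-i+1 = (n:ℤ)+1+j-i by ring] at h
      linarith
    rw [← hk2]; ring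
  have key : Phig j (n+2) p k
      = (∑ i ∈ range (n+2), (-1)^i * C ((n:ℤ)+1-i) i * C ((n:ℤ)+2-2*i) (p-i)
          * C ((n:ℤ)+2+j-i) k)
        - ∑ i ∈ range (n+1), (-1)^i * C ((n:ℤ)-i) i * C ((n:ℤ)-2*i) (p-1-i)
          * C ((n:ℤ)+1+j-i) k := by
    unfold Phig
    rw [show n+2+1 = (n+2)+1 by ring, sum_range_succ]
    have hlast : C (((n+2:ℕ):ℤ)-(n+2:ℕ)) ((n+2:ℕ):ℤ) = 0 := by
      apply C_gt; push_cast; omega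
    rw [hlast]
    rw [sum_range_succ' _ (n+1), sum_range_succ' _ (n+1)]
    rw [mul_zero, zero_mul, zero_mul, add_zero]
    rw [eq_sub_iff_add_eq, add_right_comm, ← sum_add_distrib]
    congr 1
    · apply sum_congr rfl
      intro i hi
      simp only [mem_range] at hi
      push_cast
      have hp : C ((n:ℤ)-i+1) ((i:ℤ)+1) = C ((n:ℤ)-i) ((i:ℤ)+1) + C ((n:ℤ)-i) i := by
        have h := pascal ((n:ℤ)-i) ((i:ℤ)+1) (by omega)
        rw [show (i:ℤ)+1-1 = (i:ℤ) by ring] at h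
        linarith
      rw [show ((n:ℤ)+2-(i+1)) = (n:ℤ)-i+1 by ring,
          show ((n:ℤ)+2-2*(i+1)) = (n:ℤ)-2*i by ring,
          show ((n:ℤ)+2+j-(i+1)) = (n:ℤ)+1+j-i by ring,
          show (p-(i+1)) = p-1-(i:ℤ) by ring,
          show ((n:ℤ)+1-(i+1)) = (n:ℤ)-i by ring]
      rw [hp]
      ring
  linarith [hA, hQ, key]

lemma C_zero' (a : ℤ) : C a 0 = if 0 ≤ a then 1 else 0 := by
  split_ifs with h
  · exact C_zero h
  · exact C_gt (by omega)

def Psiq (n : ℕ) (p k : ℤ) : ℚ :=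
  ∑ r ∈ range (n+1), C p r * C ((n:ℤ)-p) r * C ((n:ℤ)-r) (k-r)

def chi (m : ℕ) (p k : ℤ) : ℚ :=
  ∑ r ∈ range (m+1), C p r * C ((m:ℤ)-p) r * C ((m:ℤ)+1-r) (k-r)

lemma chi_eq (m : ℕ) (p k : ℤ) : Psiq m p k + Psiq m p (k-1) = chi m p k := by
  unfold Psiq chi
  rw [← sum_add_distrib]
  apply sum_congr rfl
  intro r hr
  simp only [mem_range] at hr
  have h := pascal ((m:ℤ)-r) (k-r) (by omega)
  rw [show ((m:ℤ)-r+1) = (m:ℤ)+1-r by ring, show (k-r)-1 = k-1-(r:ℤ) by ring] at h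
  rw [h]; ring

lemma prod_van {a b r : ℤ} (h : a + b < 2*r) : C a r * C b r = 0 := by
  rcases lt_or_ge a r with h1 | h1
  · rw [C_gt (a := a) (b := r) h1]; ring
  · rw [C_gt (a := b) (b := r) (by omega)]; ring

lemma psi6 (n : ℕ) (p k : ℤ) :
    Psiq (n+2) p k = Psiq (n+1) p k + Psiq (n+1) (p-1) k + Psiq (n+1) p (k-1)
      + Psiq (n+1) (p-1) (k-1) - Psiq n (p-1) k - Psiq n (p-1) (k-1) := by
  have brack : ∀ r : ℤ, 0 ≤ r →
      C p r * C ((n:ℤ)+2-p) r - C p r * C ((n:ℤ)+1-p) r - C (p-1) r * C ((n:ℤ)+2-p) r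
      = C (p-1) (r-1) * C ((n:ℤ)+1-p) (r-1) - C (p-1) r * C ((n:ℤ)+1-p) r := by
    intro r hr
    rcases eq_or_lt_of_le hr with h0 | h1
    · rw [← h0]
      rw [show (0:ℤ)-1 = -1 by norm_num, C_neg (a := p-1) (b := -1) (by norm_num)]
      rw [C_zero' p, C_zero' (p-1), C_zero' ((n:ℤ)+1-p), C_zero' ((n:ℤ)+2-p)]
      split_ifs <;> push_cast <;> try ring
      all_goals omega
    · have hp1 : C p r = C (p-1) r + C (p-1) (r-1) := by
        have h := pascal' (p-1) r (by omega)
        rw [show (p-1)+1 = p by ring] at h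
        exact h
      have hp2 : C ((n:ℤ)+2-p) r = C ((n:ℤ)+1-p) r + C ((n:ℤ)+1-p) (r-1) := by
        have h := pascal' ((n:ℤ)+1-p) r (by omega)
        rw [show ((n:ℤ)+1-p)+1 = (n:ℤ)+2-p by ring] at h
        exact h
      rw [hp1, hp2]; ring
  have hA : ∑ r ∈ range (n+3), C p (r:ℤ) * C ((n:ℤ)+1-p) r * C ((n:ℤ)+2-r) (k-r)
      = chi (n+1) p k := by
    rw [show n+3 = (n+2)+1 by ring, sum_range_succ,
        prod_van (a := p) (b := (n:ℤ)+1-p) (r := ((n+2:ℕ):ℤ)) (by push_cast; omega),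
        zero_mul, add_zero]
    unfold chi
    apply sum_congr rfl
    intro r hr
    push_cast
    rw [show ((n:ℤ)+1+1-r) = (n:ℤ)+2-r by ring]
  have hB : ∑ r ∈ range (n+3), C (p-1) (r:ℤ) * C ((n:ℤ)+2-p) r * C ((n:ℤ)+2-r) (k-r)
      = chi (n+1) (p-1) k := by
    rw [show n+3 = (n+2)+1 by ring, sum_range_succ,
        prod_van (a := p-1) (b := (n:ℤ)+2-p) (r := ((n+2:ℕ):ℤ)) (by push_cast; omega),
        zero_mul, add_zero]
    unfold chi
    apply sum_congr rfl
    intro r hr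
    push_cast
    rw [show ((n:ℤ)+1-(p-1)) = (n:ℤ)+2-p by ring, show ((n:ℤ)+1+1-r) = (n:ℤ)+2-r by ring]
  have hC : ∑ r ∈ range (n+2), C (p-1) (r:ℤ) * C ((n:ℤ)+1-p) r * C ((n:ℤ)+1-r) (k-r)
      = chi n (p-1) k := by
    rw [show n+2 = (n+1)+1 by ring, sum_range_succ,
        prod_van (a := p-1) (b := (n:ℤ)+1-p) (r := ((n+1:ℕ):ℤ)) (by push_cast; omega),
        zero_mul, add_zero]
    unfold chi
    apply sum_congr rfl
    intro r hr
    rw [show ((n:ℤ)-(p-1)) = (n:ℤ)+1-p by ring]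
  have e1 : Psiq (n+2) p k
      - (∑ r ∈ range (n+3), C p (r:ℤ) * C ((n:ℤ)+1-p) r * C ((n:ℤ)+2-r) (k-r))
      - (∑ r ∈ range (n+3), C (p-1) (r:ℤ) * C ((n:ℤ)+2-p) r * C ((n:ℤ)+2-r) (k-r))
      = (∑ r ∈ range (n+3), C (p-1) ((r:ℤ)-1) * C ((n:ℤ)+1-p) ((r:ℤ)-1) * C ((n:ℤ)+2-r) (k-r))
        - ∑ r ∈ range (n+3), C (p-1) (r:ℤ) * C ((n:ℤ)+1-p) r * C ((n:ℤ)+2-r) (k-r) := by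
    unfold Psiq
    rw [← sum_sub_distrib, ← sum_sub_distrib, ← sum_sub_distrib]
    apply sum_congr rfl
    intro r hr
    push_cast
    have hb := brack (r:ℤ) (by positivity)
    linear_combination C ((n:ℤ)+2-r) (k-r) * hb
  have e2 : ∑ r ∈ range (n+3), C (p-1) ((r:ℤ)-1) * C ((n:ℤ)+1-p) ((r:ℤ)-1) * C ((n:ℤ)+2-r) (k-r)
      = ∑ r ∈ range (n+2), C (p-1) (r:ℤ) * C ((n:ℤ)+1-p) r * C ((n:ℤ)+1-r) (k-1-r) := by
    rw [sum_range_succ' _ (n+2)]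
    rw [show ((0:ℕ):ℤ)-1 = -1 by norm_num, C_neg (a := p-1) (b := -1) (by norm_num)]
    rw [zero_mul, zero_mul, add_zero]
    apply sum_congr rfl
    intro r hr
    push_cast
    rw [show ((r:ℤ)+1-1) = (r:ℤ) by ring, show ((n:ℤ)+2-(r+1)) = (n:ℤ)+1-r by ring,
        show (k-((r:ℤ)+1)) = k-1-r by ring]
  have e3 : ∑ r ∈ range (n+3), C (p-1) (r:ℤ) * C ((n:ℤ)+1-p) r * C ((n:ℤ)+2-r) (k-r)
      = ∑ r ∈ range (n+2), C (p-1) (r:ℤ) * C ((n:ℤ)+1-p) r * C ((n:ℤ)+2-r) (k-r) := by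
    rw [show n+3 = (n+2)+1 by ring, sum_range_succ,
        prod_van (a := p-1) (b := (n:ℤ)+1-p) (r := ((n+2:ℕ):ℤ)) (by push_cast; omega),
        zero_mul, add_zero]
  have e4 : ∑ r ∈ range (n+2), C (p-1) (r:ℤ) * C ((n:ℤ)+1-p) r * C ((n:ℤ)+1-r) (k-1-r)
      - ∑ r ∈ range (n+2), C (p-1) (r:ℤ) * C ((n:ℤ)+1-p) r * C ((n:ℤ)+2-r) (k-r)
      = - ∑ r ∈ range (n+2), C (p-1) (r:ℤ) * C ((n:ℤ)+1-p) r * C ((n:ℤ)+1-r) (k-r) := by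
    rw [← sum_sub_distrib, ← sum_neg_distrib]
    apply sum_congr rfl
    intro r hr
    simp only [mem_range] at hr
    have h := pascal ((n:ℤ)+1-r) (k-r) (by omega)
    rw [show ((n:ℤ)+1-r+1) = (n:ℤ)+2-r by ring, show (k-r)-1 = k-1-(r:ℤ) by ring] at h
    rw [h]; ring
  have key : Psiq (n+2) p k = chi (n+1) p k + chi (n+1) (p-1) k - chi n (p-1) k := by
    rw [← hA, ← hB, ← hC]
    rw [e2, e3] at e1
    linarith [e1, e4]
  rw [key, ← chi_eq, ← chi_eq, ← chi_eq]
  ring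

lemma C_neg_left {a b : ℤ} (h : a < 0) : C a b = 0 := by
  rcases lt_or_ge b 0 with h' | h'
  · exact C_neg h'
  · exact C_gt (by omega)

lemma C_one (b : ℤ) : C 1 b = if 0 ≤ b ∧ b ≤ 1 then 1 else 0 := by
  unfold C
  split_ifs with h
  · obtain ⟨h1, h2⟩ := h
    have : b = 0 ∨ b = 1 := by omega
    rcases this with rfl | rfl <;> simp
  · rfl

lemma diamond : ∀ n, ∀ p k : ℤ, Phig 0 n p k = Psiq n p k := by
  intro n
  induction n using Nat.strong_induction_on with
  | _ n ih =>
    match n with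
    | 0 =>
      intro p k
      unfold Phig Psiq
      rw [sum_range_one, sum_range_one]
      push_cast
      rw [show (p-(0:ℤ)) = p by ring, show (k-(0:ℤ)) = k by ring]
      have hO : C 0 p = C p 0 * C (0-p) 0 := by
        rcases lt_trichotomy p 0 with h | h | h
        · rw [C_neg h, C_neg_left h]; ring
        · subst h; rw [C_zero (le_refl 0), C_zero (by norm_num : (0:ℤ) ≤ 0-0)]; ring
        · rw [C_gt h, C_neg_left (by omega : (0:ℤ)-p < 0)]; ring
      rw [C_zero (le_refl 0)]
      linear_combination C (0:ℤ) k * hO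
    | 1 =>
      intro p k
      unfold Phig Psiq
      rw [sum_range_succ, sum_range_one, sum_range_succ, sum_range_one]
      push_cast
      rw [show (p-(0:ℤ)) = p by ring, show (k-(0:ℤ)) = k by ring]
      rw [C_gt (a := (0:ℤ)) (b := (1:ℤ)) (by norm_num)]
      rw [prod_van (a := p) (b := 1-p) (r := (1:ℤ)) (by norm_num)]
      rw [C_zero (by norm_num : (0:ℤ) ≤ 1)]
      have hO : C 1 p = C p 0 * C (1-p) 0 := by
        rw [C_one p, C_zero' p, C_zero' (1-p)]
        split_ifs <;> norm_num <;> omega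
      linear_combination C (1:ℤ) k * hO
    | (m+2) =>
      intro p k
      rw [Phig6, psi6]
      simp only [ih (m+1) (by omega), ih m (by omega)]

def psq (n : ℕ) (p k : ℤ) : ℚ := if n ≤ 1 then 0 else Phig 1 (n-2) (p-1) k

lemma psq_le {n : ℕ} (h : n ≤ 1) (p k : ℤ) : psq n p k = 0 := by
  unfold psq; rw [if_pos h]

lemma psq_eq (m : ℕ) (p k : ℤ) : psq (m+2) p k = Phig 1 m (p-1) k := by
  unfold psq
  rw [if_neg (by omega)]
  norm_num

def Wq (n : ℕ) (p k : ℤ) : ℚ := Phig 0 n p k - psq n p k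

def Tq (n : ℕ) (p k : ℤ) : ℚ :=
  ∑ r ∈ range (n+1), C p r * C ((n:ℤ)-p) r * C ((n:ℤ)-r-1) (k-r-1)

lemma bridgeT (n : ℕ) (hn : 1 ≤ n) (p k : ℤ) :
    Tq n p k + Tq n p (k+1) = Psiq n p k := by
  unfold Tq Psiq
  rw [← sum_add_distrib]
  apply sum_congr rfl
  intro r hr
  simp only [mem_range] at hr
  push_cast
  by_cases hrm : r + 1 ≤ n
  · have h := pascal ((n:ℤ)-r-1) (k-r) (by omega)
    rw [show ((n:ℤ)-r-1+1) = (n:ℤ)-r by ring, show (k-r)-1 = k-(r:ℤ)-1 by ring] at h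
    rw [h, show (k+1-(r:ℤ)-1) = k-(r:ℤ) by ring]
    ring
  · have hr1 : r = n := by omega
    rw [C_neg_left (a := (n:ℤ)-r-1) (by omega)]
    rw [prod_van (a := p) (b := (n:ℤ)-p) (r := (r:ℤ)) (by omega)]
    ring

lemma phig_absorb (j m : ℕ) (p : ℤ) (k : ℕ) :
    ((k:ℚ)+1) * Phig j m p ((k:ℤ)+1) + (k:ℚ) * Phig j m p k
      = ∑ i ∈ range (m+1), (-1)^i * C ((m:ℤ)-i) i * C ((m:ℤ)-2*i) (p-i)
          * ((((m:ℤ)+j-i : ℤ)) : ℚ) * C ((m:ℤ)+j-i) k := by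
  unfold Phig
  rw [mul_sum, mul_sum, ← sum_add_distrib]
  apply sum_congr rfl
  intro i _
  have h := absorb1 ((m:ℤ)+j-i) k
  linear_combination ((-1)^i * C ((m:ℤ)-i) i * C ((m:ℤ)-2*i) (p-i)) * h

lemma bridgeW (n : ℕ) (hn : 1 ≤ n) (p : ℤ) (k : ℕ) :
    ((k:ℚ)+1) * Wq n p ((k:ℤ)+1) + (k:ℚ) * Wq n p k = (n:ℚ) * Psiq n p k := by
  match n with
  | 1 =>
    have phig01 : ∀ K : ℤ, Phig 0 1 p K = C 1 p * C 1 K := by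
      intro K
      unfold Phig
      rw [sum_range_succ, sum_range_one]
      push_cast [add_zero]
      rw [C_gt (a := (0:ℤ)) (b := (1:ℤ)) (by norm_num), C_zero (by norm_num : (0:ℤ) ≤ 1)]
      ring
    unfold Wq
    rw [psq_le (by norm_num), psq_le (by norm_num)]
    rw [← diamond 1 p (k:ℤ), phig01, phig01]
    have h := absorb1 (1:ℤ) k
    push_cast at h ⊢
    linear_combination C (1:ℤ) p * h
  | (m+2) =>
    unfold Wq
    rw [psq_eq, psq_eq]
    have h1 : ((k:ℚ)+1) * Phig 0 (m+2) p ((k:ℤ)+1) + (k:ℚ) * Phig 0 (m+2) p k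
        = ∑ i ∈ range (m+3), (-1)^i * C ((m:ℤ)+2-i) i * C ((m:ℤ)+2-2*i) (p-i)
            * ((m:ℚ)+2-i) * C ((m:ℤ)+2-i) k := by
      have h := phig_absorb 0 (m+2) p k
      rw [h]
      apply sum_congr (by norm_num)
      intro i _
      push_cast [add_zero]
      norm_num
    have h2 : ((k:ℚ)+1) * Phig 1 m (p-1) ((k:ℤ)+1) + (k:ℚ) * Phig 1 m (p-1) k
        = ∑ i ∈ range (m+1), (-1)^i * C ((m:ℤ)-i) i * C ((m:ℤ)-2*i) (p-1-i)
            * ((m:ℚ)+1-i) * C ((m:ℤ)+1-i) k := by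
      have h := phig_absorb 1 m (p-1) k
      rw [h]
      apply sum_congr rfl
      intro i _
      push_cast
      norm_num
    have hphi : Phig 0 (m+2) p (k:ℤ)
        = ∑ i ∈ range (m+3), (-1)^i * C ((m:ℤ)+2-i) i * C ((m:ℤ)+2-2*i) (p-i)
            * C ((m:ℤ)+2-i) k := by
      unfold Phig
      apply sum_congr (by norm_num)
      intro i _
      push_cast [add_zero]
      norm_num
    have hsplit : (∑ i ∈ range (m+3), (-1)^i * C ((m:ℤ)+2-i) i * C ((m:ℤ)+2-2*i) (p-i)
            * ((m:ℚ)+2-i) * C ((m:ℤ)+2-i) k)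
          + (∑ i ∈ range (m+3), (-1)^i * C ((m:ℤ)+2-i) i * C ((m:ℤ)+2-2*i) (p-i)
            * (i:ℚ) * C ((m:ℤ)+2-i) k)
        = ((m:ℚ)+2) * ∑ i ∈ range (m+3), (-1)^i * C ((m:ℤ)+2-i) i * C ((m:ℤ)+2-2*i) (p-i)
            * C ((m:ℤ)+2-i) k := by
      rw [mul_sum, ← sum_add_distrib]
      apply sum_congr rfl
      intro i _
      ring
    have hXY : (∑ i ∈ range (m+3), (-1)^i * C ((m:ℤ)+2-i) i * C ((m:ℤ)+2-2*i) (p-i)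
            * (i:ℚ) * C ((m:ℤ)+2-i) k)
          + (∑ i ∈ range (m+1), (-1)^i * C ((m:ℤ)-i) i * C ((m:ℤ)-2*i) (p-1-i)
            * ((m:ℚ)+1-i) * C ((m:ℤ)+1-i) k) = 0 := by
      have hY : (∑ i ∈ range (m+2), (-1)^i * C ((m:ℤ)-i) i * C ((m:ℤ)-2*i) (p-1-i)
            * ((m:ℚ)+1-i) * C ((m:ℤ)+1-i) k)
          = ∑ i ∈ range (m+1), (-1)^i * C ((m:ℤ)-i) i * C ((m:ℤ)-2*i) (p-1-i)
            * ((m:ℚ)+1-i) * C ((m:ℤ)+1-i) k := by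
        rw [sum_range_succ]
        have hz : ((m:ℚ)+1-((m+1:ℕ):ℚ)) = 0 := by push_cast; ring
        rw [hz, mul_zero, zero_mul, add_zero]
      rw [← hY]
      rw [sum_range_succ' _ (m+2)]
      rw [show (((0:ℕ)):ℚ) = 0 from by norm_num, mul_zero, zero_mul, add_zero]
      rw [← sum_add_distrib]
      apply sum_eq_zero
      intro i hi
      have ha := absorb2 ((m:ℤ)+1-i) i
      rw [show ((m:ℤ)+1-i-1) = (m:ℤ)-i by ring] at ha
      push_cast at ha ⊢
      rw [show ((m:ℤ)+2-(↑i+1)) = (m:ℤ)+1-i by ring,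
          show ((m:ℤ)+2-2*(↑i+1)) = (m:ℤ)-2*i by ring,
          show (p-(↑i+1)) = p-1-(i:ℤ) by ring]
      linear_combination ((-1)^(i+1) * C ((m:ℤ)-2*i) (p-1-i) * C ((m:ℤ)+1-i) k) * ha
    have hd := diamond (m+2) p (k:ℤ)
    push_cast [add_zero] at h1 h2 hphi hd ⊢
    linear_combination h1 - h2 + hsplit - hXY - ((m:ℚ)+2) * hphi + ((m:ℚ)+2) * hd

lemma Tq_vanish (n : ℕ) (p k : ℤ) (h : (n:ℤ) < k) : Tq n p k = 0 := by
  apply sum_eq_zero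
  intro r hr
  rw [C_gt (a := (n:ℤ)-r-1) (b := k-r-1) (by omega)]
  ring

lemma phig_van_k (j m : ℕ) (p k : ℤ) (h : (m:ℤ)+j < k) : Phig j m p k = 0 := by
  apply sum_eq_zero
  intro i hi
  rw [C_gt (a := (m:ℤ)+j-i) (b := k) (by omega)]
  ring

lemma phig_van_kneg (j m : ℕ) (p k : ℤ) (h : k < 0) : Phig j m p k = 0 := by
  apply sum_eq_zero
  intro i hi
  rw [C_neg (a := (m:ℤ)+j-i) (b := k) h]
  ring

lemma phig_van_p (j m : ℕ) (p k : ℤ) (h : (m:ℤ) < p) : Phig j m p k = 0 := by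
  apply sum_eq_zero
  intro i hi
  rw [C_gt (a := (m:ℤ)-2*i) (b := p-i) (by omega), mul_zero, zero_mul]

lemma phig_van_pneg (j m : ℕ) (p k : ℤ) (h : p < 0) : Phig j m p k = 0 := by
  apply sum_eq_zero
  intro i hi
  rw [C_neg (a := (m:ℤ)-2*i) (b := p-i) (by omega), mul_zero, zero_mul]

lemma psq_cases (n : ℕ) (p k : ℤ) (H : ∀ j m : ℕ, Phig j m (p-1) k = 0) : psq n p k = 0 := by
  unfold psq
  split_ifs with h
  · rfl
  · exact H 1 (n-2)

lemma Wq_van_k (n : ℕ) (p k : ℤ) (h : (n:ℤ) < k) : Wq n p k = 0 := by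
  unfold Wq
  rw [phig_van_k 0 n p k (by omega)]
  rcases le_or_gt n 1 with h1 | h1
  · rw [psq_le h1]; ring
  · obtain ⟨m, rfl⟩ : ∃ m, n = m+2 := ⟨n-2, by omega⟩
    rw [psq_eq, phig_van_k 1 m _ k (by push_cast at h ⊢; omega)]
    ring

lemma Wq_van_kneg (n : ℕ) (p k : ℤ) (h : k < 0) : Wq n p k = 0 := by
  unfold Wq
  rw [phig_van_kneg 0 n p k h, psq_cases n p k (fun j m => phig_van_kneg j m _ k h)]
  ring

lemma Wq_van_p (n : ℕ) (p k : ℤ) (h : (n:ℤ) < p) : Wq n p k = 0 := by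
  unfold Wq
  rw [phig_van_p 0 n p k h]
  rcases le_or_gt n 1 with h1 | h1
  · rw [psq_le h1]; ring
  · obtain ⟨m, rfl⟩ : ∃ m, n = m+2 := ⟨n-2, by omega⟩
    rw [psq_eq, phig_van_p 1 m _ k (by push_cast at h ⊢; omega)]
    ring

lemma Wq_van_pneg (n : ℕ) (p k : ℤ) (h : p < 0) : Wq n p k = 0 := by
  unfold Wq
  rw [phig_van_pneg 0 n p k h, psq_cases n p k (fun j m => phig_van_pneg j m _ k (by omega))]
  ring

lemma hkB (n p k : ℕ) (hk : 1 ≤ k) : (k:ℚ) * B n p k = (n:ℚ) * Tq n (p:ℤ) (k:ℤ) := by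
  have : B n p k = ((n:ℚ)/k) * Tq n (p:ℤ) (k:ℤ) := rfl
  rw [this]
  have hk0 : (k:ℚ) ≠ 0 := by positivity
  field_simp

lemma eqBW (n p : ℕ) (hn : 1 ≤ n) :
    ∀ d k : ℕ, 1 ≤ k → n + 1 ≤ k + d → (B n p k : ℚ) = Wq n (p:ℤ) (k:ℤ) := by
  intro d
  induction d with
  | zero =>
    intro k hk hkd
    have hTk : Tq n (p:ℤ) (k:ℤ) = 0 := Tq_vanish _ _ _ (by exact_mod_cast (by omega : (n:ℤ) < (k:ℤ)))
    have : B n p k = ((n:ℚ)/k) * Tq n (p:ℤ) (k:ℤ) := rfl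
    rw [this, hTk, Wq_van_k n _ _ (by exact_mod_cast (by omega : (n:ℤ) < (k:ℤ)))]
    ring
  | succ d ihd =>
    intro k hk hkd
    by_cases hcase : n + 1 ≤ k + d
    · exact ihd k hk hcase
    · have hnext : (B n p (k+1) : ℚ) = Wq n (p:ℤ) ((k:ℤ)+1) := by
        have h := ihd (k+1) (by omega) (by omega)
        rw [h]
        norm_cast
      have hB : ((k:ℚ)+1) * B n p (k+1) + (k:ℚ) * B n p k = (n:ℚ) * Psiq n (p:ℤ) (k:ℤ) := by
        have e1 := hkB n p (k+1) (by omega)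
        have e2 := hkB n p k hk
        have e3 := bridgeT n hn (p:ℤ) (k:ℤ)
        push_cast at e1 ⊢
        linear_combination e1 + e2 + (n:ℚ) * e3
      have hW := bridgeW n hn (p:ℤ) k
      have hkey : (k:ℚ) * B n p k = (k:ℚ) * Wq n (p:ℤ) (k:ℤ) := by
        rw [hnext] at hB
        linarith [hB, hW]
      exact mul_left_cancel₀ (by positivity : (k:ℚ) ≠ 0) hkey

lemma Psiq_at0 (m : ℕ) (q : ℤ) : Psiq m q 0 = if 0 ≤ q ∧ q ≤ (m:ℤ) then 1 else 0 := by
  unfold Psiq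
  rw [sum_eq_single 0]
  · rw [Nat.cast_zero, show ((0:ℤ)-0) = 0 by ring, show ((m:ℤ)-0) = (m:ℤ) by ring]
    rw [C_zero' q, C_zero' ((m:ℤ)-q), C_zero (a := (m:ℤ)) (by positivity)]
    split_ifs <;> norm_num <;> omega
  · intro b _ hb
    rw [C_neg (a := (m:ℤ)-b) (b := 0-(b:ℤ)) (by omega), mul_zero]
  · intro h
    exact absurd (mem_range.mpr (by omega)) h

lemma phig10_at0 (m : ℕ) (q : ℤ) : Phig 1 m q 0 = Phig 0 m q 0 := by
  unfold Phig
  apply sum_congr rfl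
  intro i hi
  simp only [mem_range] at hi
  rw [C_zero (a := (m:ℤ)+(1:ℕ)-i) (by push_cast; omega),
      C_zero (a := (m:ℤ)+(0:ℕ)-i) (by push_cast; omega)]

lemma Wq_at0 (n : ℕ) (hn : 1 ≤ n) (p : ℕ) (hp : p ≤ n) :
    Wq n (p:ℤ) 0 = if p = 0 ∨ p = n then 1 else 0 := by
  unfold Wq
  rcases le_or_gt n 1 with h1 | h1
  · have hn1 : n = 1 := by omega
    subst hn1
    rw [psq_le (le_refl 1), diamond 1 (p:ℤ) 0, Psiq_at0]
    split_ifs <;> push_cast at * <;> try norm_num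
    all_goals omega
  · obtain ⟨m, rfl⟩ : ∃ m, n = m+2 := ⟨n-2, by omega⟩
    rw [psq_eq, phig10_at0, diamond (m+2) (p:ℤ) 0, diamond m _ 0, Psiq_at0, Psiq_at0]
    split_ifs <;> push_cast at * <;> try norm_num
    all_goals omega

lemma BfullW (n : ℕ) (hn : 1 ≤ n) (p k : ℕ) (hp : p ≤ n) :
    (Bfull n p k : ℚ) = Wq n (p:ℤ) (k:ℤ) := by
  unfold Bfull
  by_cases hk : k = 0
  · subst hk
    rw [if_pos rfl, Nat.cast_zero, Wq_at0 n hn p hp]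
  · rw [if_neg hk]
    exact eqBW n p hn (n+1-k) k (by omega) (by omega)

lemma Wq6 (m : ℕ) (p k : ℤ) :
    Wq (m+4) p k = Wq (m+3) p k + Wq (m+3) (p-1) k + Wq (m+3) p (k-1)
      + Wq (m+3) (p-1) (k-1) - Wq (m+2) (p-1) k - Wq (m+2) (p-1) (k-1) := by
  unfold Wq
  have e4 : ∀ P K : ℤ, psq (m+4) P K = Phig 1 (m+2) (P-1) K := fun P K => psq_eq (m+2) P K
  have e3 : ∀ P K : ℤ, psq (m+3) P K = Phig 1 (m+1) (P-1) K := fun P K => psq_eq (m+1) P K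
  have e2 : ∀ P K : ℤ, psq (m+2) P K = Phig 1 m (P-1) K := fun P K => psq_eq m P K
  simp only [e4, e3, e2]
  have f0 : Phig 0 (m+4) p k = Phig 0 (m+3) p k + Phig 0 (m+3) (p-1) k + Phig 0 (m+3) p (k-1)
      + Phig 0 (m+3) (p-1) (k-1) - Phig 0 (m+2) (p-1) k - Phig 0 (m+2) (p-1) (k-1) :=
    Phig6 0 (m+2) p k
  have f1 : Phig 1 (m+2) (p-1) k = Phig 1 (m+1) (p-1) k + Phig 1 (m+1) (p-1-1) k
      + Phig 1 (m+1) (p-1) (k-1) + Phig 1 (m+1) (p-1-1) (k-1) - Phig 1 m (p-1-1) k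
      - Phig 1 m (p-1-1) (k-1) :=
    Phig6 1 m (p-1) k
  linarith [f0, f1]

section RealPart
variable (x y : ℝ)

noncomputable def DS2 (P K : ℕ) (f : ℤ → ℤ → ℝ) : ℝ :=
  ∑ p ∈ range P, ∑ k ∈ range K, f p k * x^p * y^k

lemma DS2_ext_p (P K : ℕ) (f : ℤ → ℤ → ℝ) (h : ∀ k : ℤ, f (P:ℤ) k = 0) :
    DS2 x y (P+1) K f = DS2 x y P K f := by
  unfold DS2
  rw [sum_range_succ]
  have hz : ∑ k ∈ range K, f (P:ℤ) (k:ℤ) * x^P * y^k = 0 := by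
    apply sum_eq_zero; intro k _; rw [h]; ring
  rw [hz, add_zero]

lemma DS2_ext_k (P K : ℕ) (f : ℤ → ℤ → ℝ) (h : ∀ p : ℤ, f p (K:ℤ) = 0) :
    DS2 x y P (K+1) f = DS2 x y P K f := by
  unfold DS2
  apply sum_congr rfl
  intro p _
  rw [sum_range_succ, h, zero_mul, zero_mul, add_zero]

lemma DS2_shift_p (P K : ℕ) (f : ℤ → ℤ → ℝ) (h : ∀ k : ℤ, f (-1) k = 0) :
    DS2 x y (P+1) K (fun p k => f (p-1) k) = x * DS2 x y P K f := by
  unfold DS2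
  rw [sum_range_succ' _ P]
  have hz : ∑ k ∈ range K, f (((0:ℕ):ℤ)-1) (k:ℤ) * x^(0:ℕ) * y^k = 0 := by
    apply sum_eq_zero; intro k _
    rw [show (((0:ℕ):ℤ)-1) = -1 by norm_num, h]; ring
  rw [hz, add_zero, mul_sum]
  apply sum_congr rfl
  intro p _
  rw [mul_sum]
  apply sum_congr rfl
  intro k _
  push_cast
  rw [show ((p:ℤ)+1-1) = (p:ℤ) by ring, pow_succ]
  ring

lemma DS2_shift_k (P K : ℕ) (f : ℤ → ℤ → ℝ) (h : ∀ p : ℤ, f p (-1) = 0) :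
    DS2 x y P (K+1) (fun p k => f p (k-1)) = y * DS2 x y P K f := by
  unfold DS2
  rw [mul_sum]
  apply sum_congr rfl
  intro p _
  rw [sum_range_succ' _ K]
  have hz : f (p:ℤ) (((0:ℕ):ℤ)-1) * x^p * y^(0:ℕ) = 0 := by
    rw [show (((0:ℕ):ℤ)-1) = -1 by norm_num, h]; ring
  rw [hz, add_zero, mul_sum]
  apply sum_congr rfl
  intro k _
  push_cast
  rw [show ((k:ℤ)+1-1) = (k:ℤ) by ring, pow_succ]
  ring

noncomputable def WR (n : ℕ) : ℤ → ℤ → ℝ := fun p k => ((Wq n p k : ℚ) : ℝ)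

lemma WR_pneg (n : ℕ) (p k : ℤ) (h : p < 0) : WR n p k = 0 := by
  unfold WR; rw [Wq_van_pneg n p k h]; norm_num

lemma WR_kneg (n : ℕ) (p k : ℤ) (h : k < 0) : WR n p k = 0 := by
  unfold WR; rw [Wq_van_kneg n p k h]; norm_num

lemma WR_pbig (n : ℕ) (p k : ℤ) (h : (n:ℤ) < p) : WR n p k = 0 := by
  unfold WR; rw [Wq_van_p n p k h]; norm_num

lemma WR_kbig (n : ℕ) (p k : ℤ) (h : (n:ℤ) < k) : WR n p k = 0 := by
  unfold WR; rw [Wq_van_k n p k h]; norm_num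

noncomputable def SW (n : ℕ) : ℝ := DS2 x y (n+1) (n+1) (WR n)

lemma SWrec (m : ℕ) : SW x y (m+4) = ((1+x)*(1+y)) * SW x y (m+3) - (x*(1+y)) * SW x y (m+2) := by
  have e : SW x y (m+4)
      = DS2 x y (m+5) (m+5) (fun p k => WR (m+3) p k)
      + DS2 x y (m+5) (m+5) (fun p k => WR (m+3) (p-1) k)
      + DS2 x y (m+5) (m+5) (fun p k => WR (m+3) p (k-1))
      + DS2 x y (m+5) (m+5) (fun p k => WR (m+3) (p-1) (k-1))
      - DS2 x y (m+5) (m+5) (fun p k => WR (m+2) (p-1) k)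
      - DS2 x y (m+5) (m+5) (fun p k => WR (m+2) (p-1) (k-1)) := by
    show DS2 x y (m+5) (m+5) (WR (m+4)) = _
    unfold DS2
    simp only [← sum_add_distrib, ← sum_sub_distrib]
    apply sum_congr rfl
    intro p _
    apply sum_congr rfl
    intro k _
    have hq : ((Wq (m+4) (p:ℤ) (k:ℤ) : ℚ) : ℝ)
        = ((Wq (m+3) (p:ℤ) (k:ℤ) : ℚ) : ℝ) + ((Wq (m+3) ((p:ℤ)-1) (k:ℤ) : ℚ) : ℝ)
        + ((Wq (m+3) (p:ℤ) ((k:ℤ)-1) : ℚ) : ℝ) + ((Wq (m+3) ((p:ℤ)-1) ((k:ℤ)-1) : ℚ) : ℝ)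
        - ((Wq (m+2) ((p:ℤ)-1) (k:ℤ) : ℚ) : ℝ) - ((Wq (m+2) ((p:ℤ)-1) ((k:ℤ)-1) : ℚ) : ℝ) := by
      have := Wq6 m (p:ℤ) (k:ℤ)
      exact_mod_cast congrArg (fun q : ℚ => (q:ℝ)) this
    unfold WR
    linear_combination (x^p * y^k) * hq
  have t1 : DS2 x y (m+5) (m+5) (fun p k => WR (m+3) p k) = SW x y (m+3) := by
    show DS2 x y ((m+4)+1) (m+5) (WR (m+3)) = _
    rw [DS2_ext_p x y (m+4) (m+5) _ (fun k => WR_pbig (m+3) _ k (by push_cast; omega))]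
    show DS2 x y (m+4) ((m+4)+1) (WR (m+3)) = _
    rw [DS2_ext_k x y (m+4) (m+4) _ (fun p => WR_kbig (m+3) p _ (by push_cast; omega))]
    rfl
  have t2 : DS2 x y (m+5) (m+5) (fun p k => WR (m+3) (p-1) k) = x * SW x y (m+3) := by
    show DS2 x y (m+5) ((m+4)+1) (fun p k => WR (m+3) (p-1) k) = _
    rw [DS2_ext_k x y (m+5) (m+4) (fun p k => WR (m+3) (p-1) k)
        (fun p => WR_kbig (m+3) _ _ (by push_cast; omega))]
    show DS2 x y ((m+4)+1) (m+4) (fun p k => WR (m+3) (p-1) k) = _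
    rw [DS2_shift_p x y (m+4) (m+4) (WR (m+3)) (fun k => WR_pneg (m+3) _ k (by norm_num))]
    rfl
  have t3 : DS2 x y (m+5) (m+5) (fun p k => WR (m+3) p (k-1)) = y * SW x y (m+3) := by
    show DS2 x y ((m+4)+1) (m+5) (fun p k => WR (m+3) p (k-1)) = _
    rw [DS2_ext_p x y (m+4) (m+5) (fun p k => WR (m+3) p (k-1))
        (fun k => WR_pbig (m+3) _ _ (by push_cast; omega))]
    show DS2 x y (m+4) ((m+4)+1) (fun p k => WR (m+3) p (k-1)) = _
    rw [DS2_shift_k x y (m+4) (m+4) (WR (m+3)) (fun p => WR_kneg (m+3) p _ (by norm_num))]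
    rfl
  have t4 : DS2 x y (m+5) (m+5) (fun p k => WR (m+3) (p-1) (k-1)) = x * (y * SW x y (m+3)) := by
    show DS2 x y ((m+4)+1) (m+5) (fun p k => WR (m+3) (p-1) (k-1)) = _
    rw [DS2_shift_p x y (m+4) (m+5) (fun p k => WR (m+3) p (k-1))
        (fun k => WR_pneg (m+3) _ _ (by norm_num))]
    congr 1
    show DS2 x y (m+4) ((m+4)+1) (fun p k => WR (m+3) p (k-1)) = _
    rw [DS2_shift_k x y (m+4) (m+4) (WR (m+3)) (fun p => WR_kneg (m+3) p _ (by norm_num))]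
    rfl
  have t5 : DS2 x y (m+5) (m+5) (fun p k => WR (m+2) (p-1) k) = x * SW x y (m+2) := by
    show DS2 x y (m+5) ((m+4)+1) (fun p k => WR (m+2) (p-1) k) = _
    rw [DS2_ext_k x y (m+5) (m+4) (fun p k => WR (m+2) (p-1) k)
        (fun p => WR_kbig (m+2) _ _ (by push_cast; omega))]
    show DS2 x y (m+5) ((m+3)+1) (fun p k => WR (m+2) (p-1) k) = _
    rw [DS2_ext_k x y (m+5) (m+3) (fun p k => WR (m+2) (p-1) k)
        (fun p => WR_kbig (m+2) _ _ (by push_cast; omega))]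
    show DS2 x y ((m+4)+1) (m+3) (fun p k => WR (m+2) (p-1) k) = _
    rw [DS2_shift_p x y (m+4) (m+3) (WR (m+2)) (fun k => WR_pneg (m+2) _ k (by norm_num))]
    congr 1
    show DS2 x y ((m+3)+1) (m+3) (WR (m+2)) = _
    rw [DS2_ext_p x y (m+3) (m+3) _ (fun k => WR_pbig (m+2) _ k (by push_cast; omega))]
    rfl
  have t6 : DS2 x y (m+5) (m+5) (fun p k => WR (m+2) (p-1) (k-1)) = x * (y * SW x y (m+2)) := by
    show DS2 x y ((m+4)+1) (m+5) (fun p k => WR (m+2) (p-1) (k-1)) = _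
    rw [DS2_shift_p x y (m+4) (m+5) (fun p k => WR (m+2) p (k-1))
        (fun k => WR_pneg (m+2) _ _ (by norm_num))]
    congr 1
    show DS2 x y (m+4) ((m+4)+1) (fun p k => WR (m+2) p (k-1)) = _
    rw [DS2_shift_k x y (m+4) (m+4) (WR (m+2)) (fun p => WR_kneg (m+2) p _ (by norm_num))]
    show y * DS2 x y ((m+3)+1) ((m+3)+1) (WR (m+2)) = _
    rw [DS2_ext_p x y (m+3) ((m+3)+1) (WR (m+2)) (fun k => WR_pbig (m+2) _ k (by push_cast; omega))]
    rw [DS2_ext_k x y (m+3) (m+3) (WR (m+2)) (fun p => WR_kbig (m+2) p _ (by push_cast; omega))]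
    rfl
  rw [e, t1, t2, t3, t4, t5, t6]
  ring
end RealPart

section Bases
variable (x y : ℝ)

lemma SW1 : SW x y 1 = (1+x)*(1+y) := by
  norm_num [SW, DS2, WR, Wq, Phig, psq, C, Finset.sum_range_succ, Int.toNat_natCast, Nat.choose]
  ring

lemma SW2 : SW x y 2 = ((1+x)*(1+y))^2 - 2*(x*(1+y)) := by
  norm_num [SW, DS2, WR, Wq, Phig, psq, C, Finset.sum_range_succ, Int.toNat_natCast, Nat.choose]
  norm_num [Int.toNat, Nat.choose]
  ring

lemma SW3 : SW x y 3 = ((1+x)*(1+y))^3 - 3*((1+x)*(1+y))*(x*(1+y)) := by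
  norm_num [SW, DS2, WR, Wq, Phig, psq, C, Finset.sum_range_succ, Int.toNat_natCast, Nat.choose]
  norm_num [Int.toNat, Nat.choose]
  ring
end Bases

lemma mainSW (x y : ℝ) (hD : 0 ≤ (1 + x) ^ 2 * (1 + y) ^ 2 - 4 * x * (1 + y)) :
    ∀ n : ℕ, 1 ≤ n → SW x y n =
      (((1+x)*(1+y) + Real.sqrt ((1 + x) ^ 2 * (1 + y) ^ 2 - 4 * x * (1 + y)))/2)^n
      + (((1+x)*(1+y) - Real.sqrt ((1 + x) ^ 2 * (1 + y) ^ 2 - 4 * x * (1 + y)))/2)^n := by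
  have hs2 : (Real.sqrt ((1 + x) ^ 2 * (1 + y) ^ 2 - 4 * x * (1 + y)))^2
      = (1 + x) ^ 2 * (1 + y) ^ 2 - 4 * x * (1 + y) := Real.sq_sqrt hD
  set s := Real.sqrt ((1 + x) ^ 2 * (1 + y) ^ 2 - 4 * x * (1 + y)) with hs
  intro n
  induction n using Nat.strong_induction_on with
  | _ n ih =>
    match n with
    | 0 => intro h; exact absurd h (by norm_num)
    | 1 =>
      intro _
      rw [SW1]
      ring
    | 2 =>
      intro _
      rw [SW2]
      linear_combination (-1/2 : ℝ) * hs2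
    | 3 =>
      intro _
      rw [SW3]
      linear_combination (-(3*((1+x)*(1+y)))/4) * hs2
    | (m+4) =>
      intro _
      rw [SWrec, ih (m+3) (by omega) (by omega), ih (m+2) (by omega) (by omega)]
      generalize hA' : ((1+x)*(1+y) + s)/2 = al
      generalize hB' : ((1+x)*(1+y) - s)/2 = be
      have hal : al^2 = ((1+x)*(1+y)) * al - x*(1+y) := by
        rw [← hA']; linear_combination (1/4) * hs2
      have hbe : be^2 = ((1+x)*(1+y)) * be - x*(1+y) := by
        rw [← hB']; linear_combination (1/4) * hs2
      linear_combination (-(al^(m+2))) * hal - (be^(m+2)) * hbe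

theorem stmt_12 (n : ℕ) (hn : 1 ≤ n) (x y : ℝ)
    (hD : 0 ≤ (1 + x) ^ 2 * (1 + y) ^ 2 - 4 * x * (1 + y)) :
    ∑ p ∈ range (n + 1), ∑ k ∈ range (n + 1), (Bfull n p k : ℝ) * x ^ p * y ^ k =
      (2 : ℝ) ^ (-(n : ℤ)) *
        (((1 + x) * (1 + y) + Real.sqrt ((1 + x) ^ 2 * (1 + y) ^ 2 - 4 * x * (1 + y))) ^ n +
         ((1 + x) * (1 + y) - Real.sqrt ((1 + x) ^ 2 * (1 + y) ^ 2 - 4 * x * (1 + y))) ^ n) := by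
  have hL : ∑ p ∈ range (n + 1), ∑ k ∈ range (n + 1), (Bfull n p k : ℝ) * x ^ p * y ^ k
      = SW x y n := by
    unfold SW DS2
    apply sum_congr rfl
    intro p hp
    apply sum_congr rfl
    intro k hk
    simp only [mem_range] at hp
    have hb : (Bfull n p k : ℝ) = WR n (p:ℤ) (k:ℤ) := by
      unfold WR
      exact_mod_cast congrArg (fun q : ℚ => (q:ℝ)) (BfullW n hn p k (by omega))
    rw [hb]
  rw [hL, mainSW x y hD n hn, zpow_neg, zpow_natCast]
  have h2 : ((2:ℝ)^n) ≠ 0 := by positivity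
  rw [div_pow, div_pow]
  field_simp
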